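/- For every real r > 1 and δ ≥ 0, (1+2r)^(r-1)·(1+2(r-1)/(1+δ))^{-r} ≤ 1 implies (1/(r·e))·((1+δ)/(1-1/r))^(r-1) ≤ 1; that is, S^{IPH} ⊆ S^{ZS}. -/

import Mathlib

set_option maxHeartbeats 2000000

open Real

lemma exp_rat_lb (c : ℝ) (hc : 0 ≤ c) : (1+c/128)^(128:ℕ) ≤ Real.exp c := by
  have h : Real.exp c = (Real.exp (c/128))^(128:ℕ) := by
    rw [← Real.exp_nat_mul]; push_cast; ring_nf
  rw [h]
  exact pow_le_pow_left₀ (by positivity) (by linarith [Real.add_one_le_exp (c/128)]) _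
lemma exp_rat_ub (c : ℝ) (hc0 : 0 ≤ c) (hc : c < 128) : Real.exp c ≤ ((1 - c/128)^(128:ℕ))⁻¹ := by
  have hb : (0:ℝ) < 1 - c/128 := by nlinarith
  have h : (1 - c/128)^(128:ℕ) ≤ Real.exp (-c) := by
    have h2 : Real.exp (-c) = (Real.exp (-(c/128)))^(128:ℕ) := by
      rw [← Real.exp_nat_mul]; push_cast; ring_nf
    rw [h2]
    exact pow_le_pow_left₀ hb.le (by linarith [Real.add_one_le_exp (-(c/128))]) _
  rw [Real.exp_neg] at h
  calc Real.exp c = ((Real.exp c)⁻¹)⁻¹ := by rw [inv_inv]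
    _ ≤ ((1 - c/128)^(128:ℕ))⁻¹ := inv_anti₀ (by positivity) h

lemma exp_neg_ub_quad {x : ℝ} (hx : 0 ≤ x) : Real.exp (-x) ≤ 1/(1+x+x^2/2) := by
  have hq := Real.quadratic_le_exp_of_nonneg hx
  have hp : (0:ℝ) < 1+x+x^2/2 := by positivity
  rw [le_div_iff₀ hp]
  calc Real.exp (-x) * (1+x+x^2/2) ≤ Real.exp (-x) * Real.exp x :=
        mul_le_mul_of_nonneg_left hq (Real.exp_pos _).le
    _ = 1 := by rw [← Real.exp_add]; simp
lemma exp_neg_lb_cubic {x : ℝ} (hx : 0 ≤ x) (hx1 : x ≤ 1) :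
    1-x+x^2/2-x^3/6-5*x^4/96 ≤ Real.exp (-x) := by
  have h := Real.exp_bound (x := -x) (by rw [abs_neg, abs_of_nonneg hx]; exact hx1) (n := 4) (by norm_num)
  have h2 := (abs_le.mp h).1
  have hs : ∑ i ∈ Finset.range 4, (-x)^i / (Nat.factorial i) = 1 - x + x^2/2 - x^3/6 := by
    simp [Finset.sum_range_succ, Nat.factorial]; ring
  rw [hs, abs_neg, abs_of_nonneg hx] at h2
  norm_num [Nat.factorial] at h2
  linarith

lemma log_ub {y : ℝ} (h1 : 1 ≤ y) : Real.log y ≤ (y - 1/y)/2 := by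
  have hy : (0:ℝ) < y := by linarith
  have htn : 0 ≤ Real.log y := Real.log_nonneg h1
  have hq : 1 + Real.log y + (Real.log y)^2/2 ≤ y := by
    have h := Real.quadratic_le_exp_of_nonneg htn
    rwa [Real.exp_log hy] at h
  set t := Real.log y
  have key : 0 ≤ y^2 - 1 - 2*t*y := by
    nlinarith [mul_nonneg (sub_nonneg.2 hq) (show (0:ℝ) ≤ y + (1 - t + t^2/2) by nlinarith [sq_nonneg (t-1)]), sq_nonneg (t^2)]
  have hid : (y - 1/y)/2 - t = (y^2 - 1 - 2*t*y)/(2*y) := by field_simp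
  have := div_nonneg key (by positivity : (0:ℝ) ≤ 2*y)
  linarith [hid ▸ this]

lemma piece_aux (r0 r1 lam mu qbar kap r : ℝ)
    (h01 : 1 < r0) (h0 : r0 ≤ r) (h1 : r ≤ r1)
    (hlam0 : 0 ≤ lam)
    (hlam : Real.exp lam ≤ r0)
    (hmuA : Real.log (1+2*r1) ≤ mu * r0)
    (hkap : Real.exp mu ≤ kap)
    (hq : Real.exp (-((1+lam)/(r1-1))) ≤ qbar)
    (hlin : kap - 1 ≤ 2*r0*(1 - kap*qbar))
    (hkq : kap*qbar ≤ 1) :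
    1 + 2*r*Real.exp (-((1+Real.log r)/(r-1))) ≤ (1+2*r)*Real.exp (-(Real.log (1+2*r)/r)) := by
  have hr1 : (1:ℝ) < r := lt_of_lt_of_le h01 h0
  have hr0 : (0:ℝ) < r := by linarith
  have hkap0 : (0:ℝ) < kap := lt_of_lt_of_le (Real.exp_pos mu) hkap
  have hq0 : (0:ℝ) ≤ qbar := le_trans (Real.exp_pos _).le hq
  -- log r ≥ lam
  have hlr : lam ≤ Real.log r := by
    calc lam = Real.log (Real.exp lam) := (Real.log_exp lam).symm
      _ ≤ Real.log r := Real.log_le_log (Real.exp_pos _) (le_trans hlam h0)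
  -- c lower bound
  have hc : (1+lam)/(r1-1) ≤ (1+Real.log r)/(r-1) := by
    apply div_le_div₀ (by linarith [Real.log_nonneg (le_of_lt hr1)]) (by linarith) (by linarith) (by linarith)
  have hec : Real.exp (-((1+Real.log r)/(r-1))) ≤ qbar :=
    le_trans (Real.exp_le_exp.mpr (by linarith)) hq
  -- a upper bound
  have hla : Real.log (1+2*r)/r ≤ mu := by
    have l1 : Real.log (1+2*r) ≤ Real.log (1+2*r1) := Real.log_le_log (by linarith) (by linarith)
    have l2 : 0 ≤ Real.log (1+2*r) := Real.log_nonneg (by linarith)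
    rw [div_le_iff₀ hr0]
    have hmu0 : 0 ≤ mu := by
      by_contra hneg
      push_neg at hneg
      nlinarith
    nlinarith
  have hea : kap⁻¹ ≤ Real.exp (-(Real.log (1+2*r)/r)) := by
    have : Real.exp (-mu) ≤ Real.exp (-(Real.log (1+2*r)/r)) := Real.exp_le_exp.mpr (by linarith)
    have h2 : kap⁻¹ ≤ Real.exp (-mu) := by
      rw [Real.exp_neg]
      exact inv_anti₀ (Real.exp_pos _) hkap
    linarith
  calc 1 + 2*r*Real.exp (-((1+Real.log r)/(r-1))) ≤ 1 + 2*r*qbar := by nlinarith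
    _ ≤ (1+2*r)*kap⁻¹ := by
        rw [le_mul_inv_iff₀ hkap0]
        nlinarith
    _ ≤ (1+2*r)*Real.exp (-(Real.log (1+2*r)/r)) :=
        mul_le_mul_of_nonneg_left hea (by linarith)

lemma regimeA {r : ℝ} (h1 : 1 < r) (h2 : r ≤ 1.78) :
    1 + 2*r*Real.exp (-((1+Real.log r)/(r-1))) ≤ (1+2*r)*Real.exp (-(Real.log (1+2*r)/r)) := by
  have hr0 : (0:ℝ) < r := by linarith
  have hs0 : (0:ℝ) < r - 1 := by linarith
  have h2r : (0:ℝ) < 1 + 2*r := by linarith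
  have log3_ge : (1:ℝ) ≤ Real.log 3 := by
    have h3 : Real.exp 1 ≤ 3 := by linarith [Real.exp_one_lt_d9]
    calc (1:ℝ) = Real.log (Real.exp 1) := (Real.log_exp 1).symm
      _ ≤ Real.log 3 := Real.log_le_log (Real.exp_pos 1) h3
  have log3_le : Real.log 3 ≤ 1.11 := by
    have h3 : (3:ℝ) ≤ Real.exp 1.11 := by
      have := exp_rat_lb 1.11 (by norm_num)
      have hn : (3:ℝ) ≤ (1+(1.11:ℝ)/128)^(128:ℕ) := by norm_num
      linarith
    calc Real.log 3 ≤ Real.log (Real.exp 1.11) := Real.log_le_log (by norm_num) h3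
      _ = 1.11 := Real.log_exp _
  -- bound a
  have ha : Real.log (1+2*r)/r ≤ Real.log 3 := by
    have l1 : Real.log (1+2*r) ≤ Real.log (3*r) := Real.log_le_log (by linarith) (by linarith)
    have l2 : Real.log (3*r) = Real.log 3 + Real.log r := Real.log_mul (by norm_num) (by linarith)
    have l3 : Real.log r ≤ r - 1 := Real.log_le_sub_one_of_pos hr0
    rw [div_le_iff₀ hr0]
    nlinarith [log3_ge]
  have ea : (3:ℝ)⁻¹ ≤ Real.exp (-(Real.log (1+2*r)/r)) := by
    have : Real.exp (-Real.log 3) ≤ Real.exp (-(Real.log (1+2*r)/r)) := by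
      apply Real.exp_le_exp.mpr; linarith
    rwa [Real.exp_neg, Real.exp_log (by norm_num : (0:ℝ) < 3)] at this
  -- bound c
  have hlr_lb : 1 - 1/r ≤ Real.log r := by
    have := Real.log_le_sub_one_of_pos (show (0:ℝ) < 1/r by positivity)
    rw [Real.log_div one_ne_zero (ne_of_gt hr0), Real.log_one] at this
    linarith
  have hlr_ub : Real.log r ≤ r - 1 := Real.log_le_sub_one_of_pos hr0
  have hli : Real.log (r-1) ≥ 1 - 1/(r-1) := by
    have := Real.log_le_sub_one_of_pos (show (0:ℝ) < 1/(r-1) by positivity)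
    rw [Real.log_div one_ne_zero (ne_of_gt hs0), Real.log_one] at this
    linarith
  have hc : Real.log 3 + Real.log r - Real.log (r-1) ≤ (1+Real.log r)/(r-1) := by
    rw [le_div_iff₀ hs0]
    have hfr : (r-1)/r = 1 - 1/r := by field_simp
    have k1 : (1-(r-1))*((r-1)/r) ≤ (1-(r-1))*Real.log r := by
      apply mul_le_mul_of_nonneg_left _ (by linarith)
      rw [hfr]; exact hlr_lb
    have k3 : 0.11*(r-1) ≤ (1-(r-1))*((r-1)/r) := by
      rw [← mul_div_assoc, le_div_iff₀ hr0]
      nlinarith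
    have k4 : r - 2 ≤ (r-1)*Real.log (r-1) := by
      have := mul_le_mul_of_nonneg_left hli.le (show (0:ℝ) ≤ r-1 by linarith)
      have hid : (r-1)*(1-1/(r-1)) = r - 2 := by field_simp; ring
      rw [hid] at this; exact this
    have k5 : (r-1)*Real.log 3 ≤ (r-1)*1.11 :=
      mul_le_mul_of_nonneg_left log3_le (by linarith)
    nlinarith [k1, k3, k4, k5]
  have ec : Real.exp (-((1+Real.log r)/(r-1))) ≤ (r-1)/(3*r) := by
    have h5 : -((1+Real.log r)/(r-1)) ≤ Real.log ((r-1)/(3*r)) := by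
      rw [Real.log_div (ne_of_gt hs0) (by positivity), Real.log_mul (by norm_num) (ne_of_gt hr0)]
      linarith
    calc Real.exp (-((1+Real.log r)/(r-1))) ≤ Real.exp (Real.log ((r-1)/(3*r))) :=
          Real.exp_le_exp.mpr h5
      _ = (r-1)/(3*r) := Real.exp_log (by positivity)
  -- conclude
  calc 1 + 2*r*Real.exp (-((1+Real.log r)/(r-1))) ≤ 1 + 2*r*((r-1)/(3*r)) := by
        have := mul_le_mul_of_nonneg_left ec (show (0:ℝ) ≤ 2*r by linarith)
        linarith
    _ = (1+2*r)*(3:ℝ)⁻¹ := by field_simp; ring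
    _ ≤ (1+2*r)*Real.exp (-(Real.log (1+2*r)/r)) := mul_le_mul_of_nonneg_left ea (le_of_lt h2r)

lemma keyC (r m : ℝ) (h10 : 10 ≤ r) (hm : 2.25 ≤ m)
    (hE : 1 + m + m^2/2 + m^3/6 + m^4/24 ≤ r) :
    0 ≤ (-174567461/1562500) + (82091/625)*m^1 + (417620039/1562500)*m^2 + (82091/625)*m^3 + (379)*m^4 - (327092539/781250)*r^1 - (1054794961/781250)*r^1*m^1 - (710896/625)*r^1*m^2 - (106)*r^1*m^3 + (153752539/781250)*r^2 + (441526/625)*r^2*m^1 - (106)*r^2*m^2 + (277344/625)*r^3 := by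
  have hE' : 0 ≤ r - (1 + m + m^2/2 + m^3/6 + m^4/24) := by linarith
  have hm0 : (0:ℝ) ≤ m := by linarith
  have hr0 : (0:ℝ) ≤ r := by linarith
  nlinarith [mul_nonneg (mul_nonneg hE' hr0) hr0, mul_nonneg (mul_nonneg hE' hr0) hm0,
             mul_nonneg (mul_nonneg (mul_nonneg hE' hr0) hm0) hm0,
             mul_nonneg hE' (mul_nonneg hm0 hm0), mul_nonneg hE' hr0, mul_nonneg hE' hm0,
             hE', mul_nonneg (sub_nonneg.2 h10) (sub_nonneg.2 hm),
             mul_nonneg (mul_nonneg (sub_nonneg.2 h10) (sub_nonneg.2 hm)) (sub_nonneg.2 hm),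
             sq_nonneg (m^2 - 5*r), sq_nonneg (m - 2.25), mul_nonneg (sub_nonneg.2 h10) hr0]

lemma coreC (r m : ℝ) (h10 : 10 ≤ r) (hm : 2.25 ≤ m)
    (hE : 1 + m + m^2/2 + m^3/6 + m^4/24 ≤ r) :
    (2*(m+0.7432) + (m+0.7432)/r - (379/432)*(m+0.7432)^2/r) * (1 + (1+m)/(r-1) + ((1+m)/(r-1))^2/2)
      ≤ 2*r*((1+m)/(r-1)) + r*((1+m)/(r-1))^2 := by
  have h1 : (0:ℝ) < r - 1 := by linarith
  have h2 : (0:ℝ) < r := by linarith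
  have key := keyC r m h10 hm hE
  have hiden : 2*r*((1+m)/(r-1)) + r*((1+m)/(r-1))^2
      - (2*(m+0.7432) + (m+0.7432)/r - (379/432)*(m+0.7432)^2/r) * (1 + (1+m)/(r-1) + ((1+m)/(r-1))^2/2)
      = ((-174567461/1562500) + (82091/625)*m^1 + (417620039/1562500)*m^2 + (82091/625)*m^3 + (379)*m^4 - (327092539/781250)*r^1 - (1054794961/781250)*r^1*m^1 - (710896/625)*r^1*m^2 - (106)*r^1*m^3 + (153752539/781250)*r^2 + (441526/625)*r^2*m^1 - (106)*r^2*m^2 + (277344/625)*r^3)/(864*r*(r-1)^2) := by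
    field_simp
    ring
  have hpos : 0 ≤ ((-174567461/1562500) + (82091/625)*m^1 + (417620039/1562500)*m^2 + (82091/625)*m^3 + (379)*m^4 - (327092539/781250)*r^1 - (1054794961/781250)*r^1*m^1 - (710896/625)*r^1*m^2 - (106)*r^1*m^3 + (153752539/781250)*r^2 + (441526/625)*r^2*m^1 - (106)*r^2*m^2 + (277344/625)*r^3)/(864*r*(r-1)^2) :=
    div_nonneg key (by positivity)
  linarith

lemma step3C (r w : ℝ) (hw0 : 0 < w) (h3w : 3*w ≤ r) :
    1 + 2*r - (2*w + w/r - (379/432)*w^2/r)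
      ≤ (1+2*r)*(1-w/r+(w/r)^2/2-(w/r)^3/6-5*(w/r)^4/96) := by
  have hr0 : (0:ℝ) < r := by linarith
  have hG : (0:ℝ) ≤ (-45)*w^4 - (144)*r*w^3 - (90)*r*w^4 + (432)*r^2*w^2 - (288)*r^2*w^3 + (106)*r^3*w^2 := by
    have h3w' : 0 ≤ r - 3*w := by linarith
    nlinarith [mul_nonneg (mul_nonneg h3w' hw0.le) hw0.le,
      mul_nonneg (mul_nonneg (mul_nonneg h3w' hw0.le) hw0.le) hw0.le,
      mul_nonneg (mul_nonneg (mul_nonneg h3w' hw0.le) hw0.le) hr0.le,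
      mul_nonneg (mul_nonneg (mul_nonneg (mul_nonneg h3w' hw0.le) hw0.le) hr0.le) hr0.le,
      mul_nonneg (mul_nonneg (mul_nonneg (mul_nonneg h3w' hw0.le) hw0.le) hw0.le) hr0.le,
      hw0.le, hr0.le]
  have hiden2 : (1+2*r)*(1-w/r+(w/r)^2/2-(w/r)^3/6-5*(w/r)^4/96)
      - (1 + 2*r - (2*w + w/r - (379/432)*w^2/r))
      = ((-45)*w^4 - (144)*r*w^3 - (90)*r*w^4 + (432)*r^2*w^2 - (288)*r^2*w^3 + (106)*r^3*w^2)/(864*r^4) := by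
    field_simp
    ring
  have h2 := div_nonneg hG (by positivity : (0:ℝ) ≤ 864*r^4)
  linarith [hiden2 ▸ h2]

lemma regimeC {r : ℝ} (h10 : 10 ≤ r) :
    1 + 2*r*Real.exp (-((1+Real.log r)/(r-1))) ≤ (1+2*r)*Real.exp (-(Real.log (1+2*r)/r)) := by
  have hr1 : (1:ℝ) < r := by linarith
  have hr0 : (0:ℝ) < r := by linarith
  have hs0 : (0:ℝ) < r - 1 := by linarith
  set m := Real.log r with hmdef
  have hm0 : 0 ≤ m := Real.log_nonneg (by linarith)
  have hexpm : Real.exp m = r := Real.exp_log hr0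
  have hm : 2.25 ≤ m := by
    have hub := exp_rat_ub 2.25 (by norm_num) (by norm_num)
    have hn : ((1 - (2.25:ℝ)/128)^(128:ℕ))⁻¹ ≤ 10 := by
      rw [inv_le_comm₀ (by positivity) (by norm_num)]
      norm_num
    have h5 : Real.exp 2.25 ≤ r := by linarith
    calc (2.25:ℝ) = Real.log (Real.exp 2.25) := (Real.log_exp _).symm
      _ ≤ Real.log r := Real.log_le_log (Real.exp_pos _) h5
  have hE : 1 + m + m^2/2 + m^3/6 + m^4/24 ≤ r := by
    have h := Real.sum_le_exp_of_nonneg hm0 5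
    rw [hexpm] at h
    simp [Finset.sum_range_succ, Nat.factorial] at h
    nlinarith [h]
  have hloga : Real.log (1+2*r) ≤ m + 0.7432 := by
    have hd : Real.log ((1+2*r)/(2*r)) ≤ (1+2*r)/(2*r) - 1 :=
      Real.log_le_sub_one_of_pos (by positivity)
    rw [Real.log_div (by linarith) (by positivity)] at hd
    have h2r : Real.log (2*r) = Real.log 2 + m := Real.log_mul (by norm_num) (ne_of_gt hr0)
    have hfrac : (1+2*r)/(2*r) - 1 = 1/(2*r) := by field_simp; ring
    have hfr2 : 1/(2*r) ≤ 0.05 := by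
      rw [div_le_iff₀ (by positivity)]; linarith
    have hl2 := Real.log_two_lt_d9
    linarith
  have h3w : 3*(m + 0.7432) ≤ r := by
    nlinarith [hE, sq_nonneg (m-2.25), sq_nonneg (m-3)]
  have hw0 : (0:ℝ) < m + 0.7432 := by linarith
  have ha : Real.log (1+2*r)/r ≤ (m+0.7432)/r := by gcongr
  have hahat0 : (0:ℝ) ≤ (m+0.7432)/r := by positivity
  have hahat1 : (m+0.7432)/r ≤ 1 := by
    rw [div_le_one hr0]; linarith
  have hP := exp_neg_lb_cubic hahat0 hahat1
  have hea : 1-(m+0.7432)/r+((m+0.7432)/r)^2/2-((m+0.7432)/r)^3/6-5*((m+0.7432)/r)^4/96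
      ≤ Real.exp (-(Real.log (1+2*r)/r)) :=
    le_trans hP (Real.exp_le_exp.mpr (by linarith))
  have hc0 : (0:ℝ) ≤ (1+m)/(r-1) := div_nonneg (by linarith) (by linarith)
  have hQ := exp_neg_ub_quad hc0
  have hD0 : (0:ℝ) < 1 + (1+m)/(r-1) + ((1+m)/(r-1))^2/2 := by positivity
  have hcore := coreC r m h10 hm hE
  -- step 2 : 2r * (1/D) ≤ 2r - K
  have h2rD : 2*r*(1/(1 + (1+m)/(r-1) + ((1+m)/(r-1))^2/2))
      ≤ 2*r - (2*(m+0.7432) + (m+0.7432)/r - (379/432)*(m+0.7432)^2/r) := by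
    rw [mul_one_div, div_le_iff₀ hD0]
    nlinarith [hcore]
  -- step 3 : 1 + 2r - K ≤ (1+2r) * P
  have hstep3 := step3C r (m+0.7432) hw0 h3w
  -- combine
  have hL1 : 1 + 2*r*Real.exp (-((1+m)/(r-1))) ≤ 1 + 2*r*(1/(1 + (1+m)/(r-1) + ((1+m)/(r-1))^2/2)) := by
    nlinarith [hQ, hr0]
  have hR1 : (1+2*r)*(1-(m+0.7432)/r+((m+0.7432)/r)^2/2-((m+0.7432)/r)^3/6-5*((m+0.7432)/r)^4/96)
      ≤ (1+2*r)*Real.exp (-(Real.log (1+2*r)/r)) :=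
    mul_le_mul_of_nonneg_left hea (by linarith)
  linarith


lemma piece0 {r : ℝ} (h0 : (89/50) ≤ r) (h1 : r ≤ (103/50)) :
    1 + 2*r*Real.exp (-((1+Real.log r)/(r-1))) ≤ (1+2*r)*Real.exp (-(Real.log (1+2*r)/r)) := by
  have hlam : Real.exp (575313/1000000) ≤ (89/50) := by
    have h := exp_rat_ub (575313/1000000) (by norm_num) (by norm_num)
    have hn : ((1 - ((575313/1000000):ℝ)/128)^(128:ℕ))⁻¹ ≤ (89/50) := by
      rw [inv_le_comm₀ (by positivity) (by norm_num)]
      norm_num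
    linarith
  have hmuA : Real.log (1+2*((103/50):ℝ)) ≤ (229729/250000) * (89/50) := by
    have hsplit : (1+2*((103/50):ℝ)) = 2^(2:ℕ) * (32/25) := by norm_num
    rw [hsplit, Real.log_mul (by norm_num) (by norm_num), Real.log_pow]
    have hu := log_ub (y := ((32/25):ℝ)) (by norm_num)
    have h2 := Real.log_two_lt_d9
    push_cast
    nlinarith [Real.log_nonneg (show (1:ℝ) ≤ (32/25) by norm_num)]
  have hkap : Real.exp (229729/250000) ≤ (1257447/500000) := by
    have h := exp_rat_ub (229729/250000) (by norm_num) (by norm_num)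
    have hn : ((1 - ((229729/250000):ℝ)/128)^(128:ℕ))⁻¹ ≤ (1257447/500000) := by
      rw [inv_le_comm₀ (by positivity) (by norm_num)]
      norm_num
    linarith
  have hq : Real.exp (-((1+(575313/1000000))/(((103/50):ℝ)-1))) ≤ (228203/1000000) := by
    have h := exp_rat_lb ((1+(575313/1000000))/(((103/50):ℝ)-1)) (by norm_num)
    rw [Real.exp_neg]
    have h2 : (Real.exp ((1+(575313/1000000))/(((103/50):ℝ)-1)))⁻¹ ≤ ((1+((1+(575313/1000000))/(((103/50):ℝ)-1))/128)^(128:ℕ))⁻¹ :=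
      inv_anti₀ (by positivity) h
    have h3 : ((1+((1+(575313/1000000))/(((103/50):ℝ)-1))/128)^(128:ℕ))⁻¹ ≤ (228203/1000000) := by
      rw [inv_le_comm₀ (by positivity) (by norm_num)]
      norm_num
    linarith
  exact piece_aux (89/50) (103/50) (575313/1000000) (229729/250000) (228203/1000000) (1257447/500000) r (by norm_num) h0 h1
    (by norm_num) hlam hmuA hkap hq (by norm_num) (by norm_num)

lemma piece1 {r : ℝ} (h0 : (103/50) ≤ r) (h1 : r ≤ (59/25)) :
    1 + 2*r*Real.exp (-((1+Real.log r)/(r-1))) ≤ (1+2*r)*Real.exp (-(Real.log (1+2*r)/r)) := by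
  have hlam : Real.exp (90083/125000) ≤ (103/50) := by
    have h := exp_rat_ub (90083/125000) (by norm_num) (by norm_num)
    have hn : ((1 - ((90083/125000):ℝ)/128)^(128:ℕ))⁻¹ ≤ (103/50) := by
      rw [inv_le_comm₀ (by positivity) (by norm_num)]
      norm_num
    linarith
  have hmuA : Real.log (1+2*((59/25):ℝ)) ≤ (850313/1000000) * (103/50) := by
    have hsplit : (1+2*((59/25):ℝ)) = 2^(2:ℕ) * (143/100) := by norm_num
    rw [hsplit, Real.log_mul (by norm_num) (by norm_num), Real.log_pow]
    have hu := log_ub (y := ((143/100):ℝ)) (by norm_num)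
    have h2 := Real.log_two_lt_d9
    push_cast
    nlinarith [Real.log_nonneg (show (1:ℝ) ≤ (143/100) by norm_num)]
  have hkap : Real.exp (850313/1000000) ≤ (2347029/1000000) := by
    have h := exp_rat_ub (850313/1000000) (by norm_num) (by norm_num)
    have hn : ((1 - ((850313/1000000):ℝ)/128)^(128:ℕ))⁻¹ ≤ (2347029/1000000) := by
      rw [inv_le_comm₀ (by positivity) (by norm_num)]
      norm_num
    linarith
  have hq : Real.exp (-((1+(90083/125000))/(((59/25):ℝ)-1))) ≤ (141977/500000) := by
    have h := exp_rat_lb ((1+(90083/125000))/(((59/25):ℝ)-1)) (by norm_num)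
    rw [Real.exp_neg]
    have h2 : (Real.exp ((1+(90083/125000))/(((59/25):ℝ)-1)))⁻¹ ≤ ((1+((1+(90083/125000))/(((59/25):ℝ)-1))/128)^(128:ℕ))⁻¹ :=
      inv_anti₀ (by positivity) h
    have h3 : ((1+((1+(90083/125000))/(((59/25):ℝ)-1))/128)^(128:ℕ))⁻¹ ≤ (141977/500000) := by
      rw [inv_le_comm₀ (by positivity) (by norm_num)]
      norm_num
    linarith
  exact piece_aux (103/50) (59/25) (90083/125000) (850313/1000000) (141977/500000) (2347029/1000000) r (by norm_num) h0 h1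
    (by norm_num) hlam hmuA hkap hq (by norm_num) (by norm_num)

lemma piece2 {r : ℝ} (h0 : (59/25) ≤ r) (h1 : r ≤ (269/100)) :
    1 + 2*r*Real.exp (-((1+Real.log r)/(r-1))) ≤ (1+2*r)*Real.exp (-(Real.log (1+2*r)/r)) := by
  have hlam : Real.exp (42789/50000) ≤ (59/25) := by
    have h := exp_rat_ub (42789/50000) (by norm_num) (by norm_num)
    have hn : ((1 - ((42789/50000):ℝ)/128)^(128:ℕ))⁻¹ ≤ (59/25) := by
      rw [inv_le_comm₀ (by positivity) (by norm_num)]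
      norm_num
    linarith
  have hmuA : Real.log (1+2*((269/100):ℝ)) ≤ (792507/1000000) * (59/25) := by
    have hsplit : (1+2*((269/100):ℝ)) = 2^(2:ℕ) * (319/200) := by norm_num
    rw [hsplit, Real.log_mul (by norm_num) (by norm_num), Real.log_pow]
    have hu := log_ub (y := ((319/200):ℝ)) (by norm_num)
    have h2 := Real.log_two_lt_d9
    push_cast
    nlinarith [Real.log_nonneg (show (1:ℝ) ≤ (319/200) by norm_num)]
  have hkap : Real.exp (792507/1000000) ≤ (276797/125000) := by
    have h := exp_rat_ub (792507/1000000) (by norm_num) (by norm_num)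
    have hn : ((1 - ((792507/1000000):ℝ)/128)^(128:ℕ))⁻¹ ≤ (276797/125000) := by
      rw [inv_le_comm₀ (by positivity) (by norm_num)]
      norm_num
    linarith
  have hq : Real.exp (-((1+(42789/50000))/(((269/100):ℝ)-1))) ≤ (8377/25000) := by
    have h := exp_rat_lb ((1+(42789/50000))/(((269/100):ℝ)-1)) (by norm_num)
    rw [Real.exp_neg]
    have h2 : (Real.exp ((1+(42789/50000))/(((269/100):ℝ)-1)))⁻¹ ≤ ((1+((1+(42789/50000))/(((269/100):ℝ)-1))/128)^(128:ℕ))⁻¹ :=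
      inv_anti₀ (by positivity) h
    have h3 : ((1+((1+(42789/50000))/(((269/100):ℝ)-1))/128)^(128:ℕ))⁻¹ ≤ (8377/25000) := by
      rw [inv_le_comm₀ (by positivity) (by norm_num)]
      norm_num
    linarith
  exact piece_aux (59/25) (269/100) (42789/50000) (792507/1000000) (8377/25000) (276797/125000) r (by norm_num) h0 h1
    (by norm_num) hlam hmuA hkap hq (by norm_num) (by norm_num)

lemma piece3 {r : ℝ} (h0 : (269/100) ≤ r) (h1 : r ≤ (303/100)) :
    1 + 2*r*Real.exp (-((1+Real.log r)/(r-1))) ≤ (1+2*r)*Real.exp (-(Real.log (1+2*r)/r)) := by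
  have hlam : Real.exp (197143/200000) ≤ (269/100) := by
    have h := exp_rat_ub (197143/200000) (by norm_num) (by norm_num)
    have hn : ((1 - ((197143/200000):ℝ)/128)^(128:ℕ))⁻¹ ≤ (269/100) := by
      rw [inv_le_comm₀ (by positivity) (by norm_num)]
      norm_num
    linarith
  have hmuA : Real.log (1+2*((303/100):ℝ)) ≤ (184527/250000) * (269/100) := by
    have hsplit : (1+2*((303/100):ℝ)) = 2^(2:ℕ) * (353/200) := by norm_num
    rw [hsplit, Real.log_mul (by norm_num) (by norm_num), Real.log_pow]
    have hu := log_ub (y := ((353/200):ℝ)) (by norm_num)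
    have h2 := Real.log_two_lt_d9
    push_cast
    nlinarith [Real.log_nonneg (show (1:ℝ) ≤ (353/200) by norm_num)]
  have hkap : Real.exp (184527/250000) ≤ (32757/15625) := by
    have h := exp_rat_ub (184527/250000) (by norm_num) (by norm_num)
    have hn : ((1 - ((184527/250000):ℝ)/128)^(128:ℕ))⁻¹ ≤ (32757/15625) := by
      rw [inv_le_comm₀ (by positivity) (by norm_num)]
      norm_num
    linarith
  have hq : Real.exp (-((1+(197143/200000))/(((303/100):ℝ)-1))) ≤ (1887/5000) := by
    have h := exp_rat_lb ((1+(197143/200000))/(((303/100):ℝ)-1)) (by norm_num)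
    rw [Real.exp_neg]
    have h2 : (Real.exp ((1+(197143/200000))/(((303/100):ℝ)-1)))⁻¹ ≤ ((1+((1+(197143/200000))/(((303/100):ℝ)-1))/128)^(128:ℕ))⁻¹ :=
      inv_anti₀ (by positivity) h
    have h3 : ((1+((1+(197143/200000))/(((303/100):ℝ)-1))/128)^(128:ℕ))⁻¹ ≤ (1887/5000) := by
      rw [inv_le_comm₀ (by positivity) (by norm_num)]
      norm_num
    linarith
  exact piece_aux (269/100) (303/100) (197143/200000) (184527/250000) (1887/5000) (32757/15625) r (by norm_num) h0 h1
    (by norm_num) hlam hmuA hkap hq (by norm_num) (by norm_num)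

lemma piece4 {r : ℝ} (h0 : (303/100) ≤ r) (h1 : r ≤ (339/100)) :
    1 + 2*r*Real.exp (-((1+Real.log r)/(r-1))) ≤ (1+2*r)*Real.exp (-(Real.log (1+2*r)/r)) := by
  have hlam : Real.exp (1103761/1000000) ≤ (303/100) := by
    have h := exp_rat_ub (1103761/1000000) (by norm_num) (by norm_num)
    have hn : ((1 - ((1103761/1000000):ℝ)/128)^(128:ℕ))⁻¹ ≤ (303/100) := by
      rw [inv_le_comm₀ (by positivity) (by norm_num)]
      norm_num
    linarith
  have hmuA : Real.log (1+2*((339/100):ℝ)) ≤ (693639/1000000) * (303/100) := by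
    have hsplit : (1+2*((339/100):ℝ)) = 2^(2:ℕ) * (389/200) := by norm_num
    rw [hsplit, Real.log_mul (by norm_num) (by norm_num), Real.log_pow]
    have hu := log_ub (y := ((389/200):ℝ)) (by norm_num)
    have h2 := Real.log_two_lt_d9
    push_cast
    nlinarith [Real.log_nonneg (show (1:ℝ) ≤ (389/200) by norm_num)]
  have hkap : Real.exp (693639/1000000) ≤ (1002381/500000) := by
    have h := exp_rat_ub (693639/1000000) (by norm_num) (by norm_num)
    have hn : ((1 - ((693639/1000000):ℝ)/128)^(128:ℕ))⁻¹ ≤ (1002381/500000) := by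
      rw [inv_le_comm₀ (by positivity) (by norm_num)]
      norm_num
    linarith
  have hq : Real.exp (-((1+(1103761/1000000))/(((339/100):ℝ)-1))) ≤ (207971/500000) := by
    have h := exp_rat_lb ((1+(1103761/1000000))/(((339/100):ℝ)-1)) (by norm_num)
    rw [Real.exp_neg]
    have h2 : (Real.exp ((1+(1103761/1000000))/(((339/100):ℝ)-1)))⁻¹ ≤ ((1+((1+(1103761/1000000))/(((339/100):ℝ)-1))/128)^(128:ℕ))⁻¹ :=
      inv_anti₀ (by positivity) h
    have h3 : ((1+((1+(1103761/1000000))/(((339/100):ℝ)-1))/128)^(128:ℕ))⁻¹ ≤ (207971/500000) := by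
      rw [inv_le_comm₀ (by positivity) (by norm_num)]
      norm_num
    linarith
  exact piece_aux (303/100) (339/100) (1103761/1000000) (693639/1000000) (207971/500000) (1002381/500000) r (by norm_num) h0 h1
    (by norm_num) hlam hmuA hkap hq (by norm_num) (by norm_num)

lemma piece5 {r : ℝ} (h0 : (339/100) ≤ r) (h1 : r ≤ (383/100)) :
    1 + 2*r*Real.exp (-((1+Real.log r)/(r-1))) ≤ (1+2*r)*Real.exp (-(Real.log (1+2*r)/r)) := by
  have hlam : Real.exp (607503/500000) ≤ (339/100) := by
    have h := exp_rat_ub (607503/500000) (by norm_num) (by norm_num)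
    have hn : ((1 - ((607503/500000):ℝ)/128)^(128:ℕ))⁻¹ ≤ (339/100) := by
      rw [inv_le_comm₀ (by positivity) (by norm_num)]
      norm_num
    linarith
  have hmuA : Real.log (1+2*((383/100):ℝ)) ≤ (318407/500000) * (339/100) := by
    have hsplit : (1+2*((383/100):ℝ)) = 2^(3:ℕ) * (433/400) := by norm_num
    rw [hsplit, Real.log_mul (by norm_num) (by norm_num), Real.log_pow]
    have hu := log_ub (y := ((433/400):ℝ)) (by norm_num)
    have h2 := Real.log_two_lt_d9
    push_cast
    nlinarith [Real.log_nonneg (show (1:ℝ) ≤ (433/400) by norm_num)]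
  have hkap : Real.exp (318407/500000) ≤ (118341/62500) := by
    have h := exp_rat_ub (318407/500000) (by norm_num) (by norm_num)
    have hn : ((1 - ((318407/500000):ℝ)/128)^(128:ℕ))⁻¹ ≤ (118341/62500) := by
      rw [inv_le_comm₀ (by positivity) (by norm_num)]
      norm_num
    linarith
  have hq : Real.exp (-((1+(607503/500000))/(((383/100):ℝ)-1))) ≤ (45827/100000) := by
    have h := exp_rat_lb ((1+(607503/500000))/(((383/100):ℝ)-1)) (by norm_num)
    rw [Real.exp_neg]
    have h2 : (Real.exp ((1+(607503/500000))/(((383/100):ℝ)-1)))⁻¹ ≤ ((1+((1+(607503/500000))/(((383/100):ℝ)-1))/128)^(128:ℕ))⁻¹ :=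
      inv_anti₀ (by positivity) h
    have h3 : ((1+((1+(607503/500000))/(((383/100):ℝ)-1))/128)^(128:ℕ))⁻¹ ≤ (45827/100000) := by
      rw [inv_le_comm₀ (by positivity) (by norm_num)]
      norm_num
    linarith
  exact piece_aux (339/100) (383/100) (607503/500000) (318407/500000) (45827/100000) (118341/62500) r (by norm_num) h0 h1
    (by norm_num) hlam hmuA hkap hq (by norm_num) (by norm_num)

lemma piece6 {r : ℝ} (h0 : (383/100) ≤ r) (h1 : r ≤ (43/10)) :
    1 + 2*r*Real.exp (-((1+Real.log r)/(r-1))) ≤ (1+2*r)*Real.exp (-(Real.log (1+2*r)/r)) := by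
  have hlam : Real.exp (1335819/1000000) ≤ (383/100) := by
    have h := exp_rat_ub (1335819/1000000) (by norm_num) (by norm_num)
    have hn : ((1 - ((1335819/1000000):ℝ)/128)^(128:ℕ))⁻¹ ≤ (383/100) := by
      rw [inv_le_comm₀ (by positivity) (by norm_num)]
      norm_num
    linarith
  have hmuA : Real.log (1+2*((43/10):ℝ)) ≤ (590803/1000000) * (383/100) := by
    have hsplit : (1+2*((43/10):ℝ)) = 2^(3:ℕ) * (6/5) := by norm_num
    rw [hsplit, Real.log_mul (by norm_num) (by norm_num), Real.log_pow]
    have hu := log_ub (y := ((6/5):ℝ)) (by norm_num)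
    have h2 := Real.log_two_lt_d9
    push_cast
    nlinarith [Real.log_nonneg (show (1:ℝ) ≤ (6/5) by norm_num)]
  have hkap : Real.exp (590803/1000000) ≤ (1807909/1000000) := by
    have h := exp_rat_ub (590803/1000000) (by norm_num) (by norm_num)
    have hn : ((1 - ((590803/1000000):ℝ)/128)^(128:ℕ))⁻¹ ≤ (1807909/1000000) := by
      rw [inv_le_comm₀ (by positivity) (by norm_num)]
      norm_num
    linarith
  have hq : Real.exp (-((1+(1335819/1000000))/(((43/10):ℝ)-1))) ≤ (6171/12500) := by
    have h := exp_rat_lb ((1+(1335819/1000000))/(((43/10):ℝ)-1)) (by norm_num)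
    rw [Real.exp_neg]
    have h2 : (Real.exp ((1+(1335819/1000000))/(((43/10):ℝ)-1)))⁻¹ ≤ ((1+((1+(1335819/1000000))/(((43/10):ℝ)-1))/128)^(128:ℕ))⁻¹ :=
      inv_anti₀ (by positivity) h
    have h3 : ((1+((1+(1335819/1000000))/(((43/10):ℝ)-1))/128)^(128:ℕ))⁻¹ ≤ (6171/12500) := by
      rw [inv_le_comm₀ (by positivity) (by norm_num)]
      norm_num
    linarith
  exact piece_aux (383/100) (43/10) (1335819/1000000) (590803/1000000) (6171/12500) (1807909/1000000) r (by norm_num) h0 h1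
    (by norm_num) hlam hmuA hkap hq (by norm_num) (by norm_num)

lemma piece7 {r : ℝ} (h0 : (43/10) ≤ r) (h1 : r ≤ (481/100)) :
    1 + 2*r*Real.exp (-((1+Real.log r)/(r-1))) ≤ (1+2*r)*Real.exp (-(Real.log (1+2*r)/r)) := by
  have hlam : Real.exp (1450303/1000000) ≤ (43/10) := by
    have h := exp_rat_ub (1450303/1000000) (by norm_num) (by norm_num)
    have hn : ((1 - ((1450303/1000000):ℝ)/128)^(128:ℕ))⁻¹ ≤ (43/10) := by
      rw [inv_le_comm₀ (by positivity) (by norm_num)]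
      norm_num
    linarith
  have hmuA : Real.log (1+2*((481/100):ℝ)) ≤ (13759/25000) * (43/10) := by
    have hsplit : (1+2*((481/100):ℝ)) = 2^(3:ℕ) * (531/400) := by norm_num
    rw [hsplit, Real.log_mul (by norm_num) (by norm_num), Real.log_pow]
    have hu := log_ub (y := ((531/400):ℝ)) (by norm_num)
    have h2 := Real.log_two_lt_d9
    push_cast
    nlinarith [Real.log_nonneg (show (1:ℝ) ≤ (531/400) by norm_num)]
  have hkap : Real.exp (13759/25000) ≤ (27124/15625) := by
    have h := exp_rat_ub (13759/25000) (by norm_num) (by norm_num)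
    have hn : ((1 - ((13759/25000):ℝ)/128)^(128:ℕ))⁻¹ ≤ (27124/15625) := by
      rw [inv_le_comm₀ (by positivity) (by norm_num)]
      norm_num
    linarith
  have hq : Real.exp (-((1+(1450303/1000000))/(((481/100):ℝ)-1))) ≤ (526497/1000000) := by
    have h := exp_rat_lb ((1+(1450303/1000000))/(((481/100):ℝ)-1)) (by norm_num)
    rw [Real.exp_neg]
    have h2 : (Real.exp ((1+(1450303/1000000))/(((481/100):ℝ)-1)))⁻¹ ≤ ((1+((1+(1450303/1000000))/(((481/100):ℝ)-1))/128)^(128:ℕ))⁻¹ :=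
      inv_anti₀ (by positivity) h
    have h3 : ((1+((1+(1450303/1000000))/(((481/100):ℝ)-1))/128)^(128:ℕ))⁻¹ ≤ (526497/1000000) := by
      rw [inv_le_comm₀ (by positivity) (by norm_num)]
      norm_num
    linarith
  exact piece_aux (43/10) (481/100) (1450303/1000000) (13759/25000) (526497/1000000) (27124/15625) r (by norm_num) h0 h1
    (by norm_num) hlam hmuA hkap hq (by norm_num) (by norm_num)

lemma piece8 {r : ℝ} (h0 : (481/100) ≤ r) (h1 : r ≤ (107/20)) :
    1 + 2*r*Real.exp (-((1+Real.log r)/(r-1))) ≤ (1+2*r)*Real.exp (-(Real.log (1+2*r)/r)) := by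
  have hlam : Real.exp (1561059/1000000) ≤ (481/100) := by
    have h := exp_rat_ub (1561059/1000000) (by norm_num) (by norm_num)
    have hn : ((1 - ((1561059/1000000):ℝ)/128)^(128:ℕ))⁻¹ ≤ (481/100) := by
      rw [inv_le_comm₀ (by positivity) (by norm_num)]
      norm_num
    linarith
  have hmuA : Real.log (1+2*((107/20):ℝ)) ≤ (513267/1000000) * (481/100) := by
    have hsplit : (1+2*((107/20):ℝ)) = 2^(3:ℕ) * (117/80) := by norm_num
    rw [hsplit, Real.log_mul (by norm_num) (by norm_num), Real.log_pow]
    have hu := log_ub (y := ((117/80):ℝ)) (by norm_num)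
    have h2 := Real.log_two_lt_d9
    push_cast
    nlinarith [Real.log_nonneg (show (1:ℝ) ≤ (117/80) by norm_num)]
  have hkap : Real.exp (513267/1000000) ≤ (836233/500000) := by
    have h := exp_rat_ub (513267/1000000) (by norm_num) (by norm_num)
    have hn : ((1 - ((513267/1000000):ℝ)/128)^(128:ℕ))⁻¹ ≤ (836233/500000) := by
      rw [inv_le_comm₀ (by positivity) (by norm_num)]
      norm_num
    linarith
  have hq : Real.exp (-((1+(1561059/1000000))/(((107/20):ℝ)-1))) ≤ (555773/1000000) := by
    have h := exp_rat_lb ((1+(1561059/1000000))/(((107/20):ℝ)-1)) (by norm_num)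
    rw [Real.exp_neg]
    have h2 : (Real.exp ((1+(1561059/1000000))/(((107/20):ℝ)-1)))⁻¹ ≤ ((1+((1+(1561059/1000000))/(((107/20):ℝ)-1))/128)^(128:ℕ))⁻¹ :=
      inv_anti₀ (by positivity) h
    have h3 : ((1+((1+(1561059/1000000))/(((107/20):ℝ)-1))/128)^(128:ℕ))⁻¹ ≤ (555773/1000000) := by
      rw [inv_le_comm₀ (by positivity) (by norm_num)]
      norm_num
    linarith
  exact piece_aux (481/100) (107/20) (1561059/1000000) (513267/1000000) (555773/1000000) (836233/500000) r (by norm_num) h0 h1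
    (by norm_num) hlam hmuA hkap hq (by norm_num) (by norm_num)

lemma piece9 {r : ℝ} (h0 : (107/20) ≤ r) (h1 : r ≤ (591/100)) :
    1 + 2*r*Real.exp (-((1+Real.log r)/(r-1))) ≤ (1+2*r)*Real.exp (-(Real.log (1+2*r)/r)) := by
  have hlam : Real.exp (416527/250000) ≤ (107/20) := by
    have h := exp_rat_ub (416527/250000) (by norm_num) (by norm_num)
    have hn : ((1 - ((416527/250000):ℝ)/128)^(128:ℕ))⁻¹ ≤ (107/20) := by
      rw [inv_le_comm₀ (by positivity) (by norm_num)]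
      norm_num
    linarith
  have hmuA : Real.log (1+2*((591/100):ℝ)) ≤ (480127/1000000) * (107/20) := by
    have hsplit : (1+2*((591/100):ℝ)) = 2^(3:ℕ) * (641/400) := by norm_num
    rw [hsplit, Real.log_mul (by norm_num) (by norm_num), Real.log_pow]
    have hu := log_ub (y := ((641/400):ℝ)) (by norm_num)
    have h2 := Real.log_two_lt_d9
    push_cast
    nlinarith [Real.log_nonneg (show (1:ℝ) ≤ (641/400) by norm_num)]
  have hkap : Real.exp (480127/1000000) ≤ (80887/50000) := by
    have h := exp_rat_ub (480127/1000000) (by norm_num) (by norm_num)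
    have hn : ((1 - ((480127/1000000):ℝ)/128)^(128:ℕ))⁻¹ ≤ (80887/50000) := by
      rw [inv_le_comm₀ (by positivity) (by norm_num)]
      norm_num
    linarith
  have hq : Real.exp (-((1+(416527/250000))/(((591/100):ℝ)-1))) ≤ (290837/500000) := by
    have h := exp_rat_lb ((1+(416527/250000))/(((591/100):ℝ)-1)) (by norm_num)
    rw [Real.exp_neg]
    have h2 : (Real.exp ((1+(416527/250000))/(((591/100):ℝ)-1)))⁻¹ ≤ ((1+((1+(416527/250000))/(((591/100):ℝ)-1))/128)^(128:ℕ))⁻¹ :=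
      inv_anti₀ (by positivity) h
    have h3 : ((1+((1+(416527/250000))/(((591/100):ℝ)-1))/128)^(128:ℕ))⁻¹ ≤ (290837/500000) := by
      rw [inv_le_comm₀ (by positivity) (by norm_num)]
      norm_num
    linarith
  exact piece_aux (107/20) (591/100) (416527/250000) (480127/1000000) (290837/500000) (80887/50000) r (by norm_num) h0 h1
    (by norm_num) hlam hmuA hkap hq (by norm_num) (by norm_num)

lemma piece10 {r : ℝ} (h0 : (591/100) ≤ r) (h1 : r ≤ (649/100)) :
    1 + 2*r*Real.exp (-((1+Real.log r)/(r-1))) ≤ (1+2*r)*Real.exp (-(Real.log (1+2*r)/r)) := by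
  have hlam : Real.exp (882157/500000) ≤ (591/100) := by
    have h := exp_rat_ub (882157/500000) (by norm_num) (by norm_num)
    have hn : ((1 - ((882157/500000):ℝ)/128)^(128:ℕ))⁻¹ ≤ (591/100) := by
      rw [inv_le_comm₀ (by positivity) (by norm_num)]
      norm_num
    linarith
  have hmuA : Real.log (1+2*((649/100):ℝ)) ≤ (451281/1000000) * (591/100) := by
    have hsplit : (1+2*((649/100):ℝ)) = 2^(3:ℕ) * (699/400) := by norm_num
    rw [hsplit, Real.log_mul (by norm_num) (by norm_num), Real.log_pow]
    have hu := log_ub (y := ((699/400):ℝ)) (by norm_num)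
    have h2 := Real.log_two_lt_d9
    push_cast
    nlinarith [Real.log_nonneg (show (1:ℝ) ≤ (699/400) by norm_num)]
  have hkap : Real.exp (451281/1000000) ≤ (196447/125000) := by
    have h := exp_rat_ub (451281/1000000) (by norm_num) (by norm_num)
    have hn : ((1 - ((451281/1000000):ℝ)/128)^(128:ℕ))⁻¹ ≤ (196447/125000) := by
      rw [inv_le_comm₀ (by positivity) (by norm_num)]
      norm_num
    linarith
  have hq : Real.exp (-((1+(882157/500000))/(((649/100):ℝ)-1))) ≤ (604999/1000000) := by
    have h := exp_rat_lb ((1+(882157/500000))/(((649/100):ℝ)-1)) (by norm_num)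
    rw [Real.exp_neg]
    have h2 : (Real.exp ((1+(882157/500000))/(((649/100):ℝ)-1)))⁻¹ ≤ ((1+((1+(882157/500000))/(((649/100):ℝ)-1))/128)^(128:ℕ))⁻¹ :=
      inv_anti₀ (by positivity) h
    have h3 : ((1+((1+(882157/500000))/(((649/100):ℝ)-1))/128)^(128:ℕ))⁻¹ ≤ (604999/1000000) := by
      rw [inv_le_comm₀ (by positivity) (by norm_num)]
      norm_num
    linarith
  exact piece_aux (591/100) (649/100) (882157/500000) (451281/1000000) (604999/1000000) (196447/125000) r (by norm_num) h0 h1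
    (by norm_num) hlam hmuA hkap hq (by norm_num) (by norm_num)

lemma piece11 {r : ℝ} (h0 : (649/100) ≤ r) (h1 : r ≤ (177/25)) :
    1 + 2*r*Real.exp (-((1+Real.log r)/(r-1))) ≤ (1+2*r)*Real.exp (-(Real.log (1+2*r)/r)) := by
  have hlam : Real.exp (1856597/1000000) ≤ (649/100) := by
    have h := exp_rat_ub (1856597/1000000) (by norm_num) (by norm_num)
    have hn : ((1 - ((1856597/1000000):ℝ)/128)^(128:ℕ))⁻¹ ≤ (649/100) := by
      rw [inv_le_comm₀ (by positivity) (by norm_num)]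
      norm_num
    linarith
  have hmuA : Real.log (1+2*((177/25):ℝ)) ≤ (212873/500000) * (649/100) := by
    have hsplit : (1+2*((177/25):ℝ)) = 2^(3:ℕ) * (379/200) := by norm_num
    rw [hsplit, Real.log_mul (by norm_num) (by norm_num), Real.log_pow]
    have hu := log_ub (y := ((379/200):ℝ)) (by norm_num)
    have h2 := Real.log_two_lt_d9
    push_cast
    nlinarith [Real.log_nonneg (show (1:ℝ) ≤ (379/200) by norm_num)]
  have hkap : Real.exp (212873/500000) ≤ (1531819/1000000) := by
    have h := exp_rat_ub (212873/500000) (by norm_num) (by norm_num)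
    have hn : ((1 - ((212873/500000):ℝ)/128)^(128:ℕ))⁻¹ ≤ (1531819/1000000) := by
      rw [inv_le_comm₀ (by positivity) (by norm_num)]
      norm_num
    linarith
  have hq : Real.exp (-((1+(1856597/1000000))/(((177/25):ℝ)-1))) ≤ (156411/250000) := by
    have h := exp_rat_lb ((1+(1856597/1000000))/(((177/25):ℝ)-1)) (by norm_num)
    rw [Real.exp_neg]
    have h2 : (Real.exp ((1+(1856597/1000000))/(((177/25):ℝ)-1)))⁻¹ ≤ ((1+((1+(1856597/1000000))/(((177/25):ℝ)-1))/128)^(128:ℕ))⁻¹ :=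
      inv_anti₀ (by positivity) h
    have h3 : ((1+((1+(1856597/1000000))/(((177/25):ℝ)-1))/128)^(128:ℕ))⁻¹ ≤ (156411/250000) := by
      rw [inv_le_comm₀ (by positivity) (by norm_num)]
      norm_num
    linarith
  exact piece_aux (649/100) (177/25) (1856597/1000000) (212873/500000) (156411/250000) (1531819/1000000) r (by norm_num) h0 h1
    (by norm_num) hlam hmuA hkap hq (by norm_num) (by norm_num)

lemma piece12 {r : ℝ} (h0 : (177/25) ≤ r) (h1 : r ≤ (779/100)) :
    1 + 2*r*Real.exp (-((1+Real.log r)/(r-1))) ≤ (1+2*r)*Real.exp (-(Real.log (1+2*r)/r)) := by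
  have hlam : Real.exp (485577/250000) ≤ (177/25) := by
    have h := exp_rat_ub (485577/250000) (by norm_num) (by norm_num)
    have hn : ((1 - ((485577/250000):ℝ)/128)^(128:ℕ))⁻¹ ≤ (177/25) := by
      rw [inv_le_comm₀ (by positivity) (by norm_num)]
      norm_num
    linarith
  have hmuA : Real.log (1+2*((779/100):ℝ)) ≤ (2479/6250) * (177/25) := by
    have hsplit : (1+2*((779/100):ℝ)) = 2^(4:ℕ) * (829/800) := by norm_num
    rw [hsplit, Real.log_mul (by norm_num) (by norm_num), Real.log_pow]
    have hu := log_ub (y := ((829/800):ℝ)) (by norm_num)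
    have h2 := Real.log_two_lt_d9
    push_cast
    nlinarith [Real.log_nonneg (show (1:ℝ) ≤ (829/800) by norm_num)]
  have hkap : Real.exp (2479/6250) ≤ (1487737/1000000) := by
    have h := exp_rat_ub (2479/6250) (by norm_num) (by norm_num)
    have hn : ((1 - ((2479/6250):ℝ)/128)^(128:ℕ))⁻¹ ≤ (1487737/1000000) := by
      rw [inv_le_comm₀ (by positivity) (by norm_num)]
      norm_num
    linarith
  have hq : Real.exp (-((1+(485577/250000))/(((779/100):ℝ)-1))) ≤ (324411/500000) := by
    have h := exp_rat_lb ((1+(485577/250000))/(((779/100):ℝ)-1)) (by norm_num)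
    rw [Real.exp_neg]
    have h2 : (Real.exp ((1+(485577/250000))/(((779/100):ℝ)-1)))⁻¹ ≤ ((1+((1+(485577/250000))/(((779/100):ℝ)-1))/128)^(128:ℕ))⁻¹ :=
      inv_anti₀ (by positivity) h
    have h3 : ((1+((1+(485577/250000))/(((779/100):ℝ)-1))/128)^(128:ℕ))⁻¹ ≤ (324411/500000) := by
      rw [inv_le_comm₀ (by positivity) (by norm_num)]
      norm_num
    linarith
  exact piece_aux (177/25) (779/100) (485577/250000) (2479/6250) (324411/500000) (1487737/1000000) r (by norm_num) h0 h1
    (by norm_num) hlam hmuA hkap hq (by norm_num) (by norm_num)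

lemma piece13 {r : ℝ} (h0 : (779/100) ≤ r) (h1 : r ≤ (427/50)) :
    1 + 2*r*Real.exp (-((1+Real.log r)/(r-1))) ≤ (1+2*r)*Real.exp (-(Real.log (1+2*r)/r)) := by
  have hlam : Real.exp (1018189/500000) ≤ (779/100) := by
    have h := exp_rat_ub (1018189/500000) (by norm_num) (by norm_num)
    have hn : ((1 - ((1018189/500000):ℝ)/128)^(128:ℕ))⁻¹ ≤ (779/100) := by
      rw [inv_le_comm₀ (by positivity) (by norm_num)]
      norm_num
    linarith
  have hmuA : Real.log (1+2*((427/50):ℝ)) ≤ (74329/200000) * (779/100) := by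
    have hsplit : (1+2*((427/50):ℝ)) = 2^(4:ℕ) * (113/100) := by norm_num
    rw [hsplit, Real.log_mul (by norm_num) (by norm_num), Real.log_pow]
    have hu := log_ub (y := ((113/100):ℝ)) (by norm_num)
    have h2 := Real.log_two_lt_d9
    push_cast
    nlinarith [Real.log_nonneg (show (1:ℝ) ≤ (113/100) by norm_num)]
  have hkap : Real.exp (74329/200000) ≤ (1450903/1000000) := by
    have h := exp_rat_ub (74329/200000) (by norm_num) (by norm_num)
    have hn : ((1 - ((74329/200000):ℝ)/128)^(128:ℕ))⁻¹ ≤ (1450903/1000000) := by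
      rw [inv_le_comm₀ (by positivity) (by norm_num)]
      norm_num
    linarith
  have hq : Real.exp (-((1+(1018189/500000))/(((427/50):ℝ)-1))) ≤ (334467/500000) := by
    have h := exp_rat_lb ((1+(1018189/500000))/(((427/50):ℝ)-1)) (by norm_num)
    rw [Real.exp_neg]
    have h2 : (Real.exp ((1+(1018189/500000))/(((427/50):ℝ)-1)))⁻¹ ≤ ((1+((1+(1018189/500000))/(((427/50):ℝ)-1))/128)^(128:ℕ))⁻¹ :=
      inv_anti₀ (by positivity) h
    have h3 : ((1+((1+(1018189/500000))/(((427/50):ℝ)-1))/128)^(128:ℕ))⁻¹ ≤ (334467/500000) := by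
      rw [inv_le_comm₀ (by positivity) (by norm_num)]
      norm_num
    linarith
  exact piece_aux (779/100) (427/50) (1018189/500000) (74329/200000) (334467/500000) (1450903/1000000) r (by norm_num) h0 h1
    (by norm_num) hlam hmuA hkap hq (by norm_num) (by norm_num)

lemma piece14 {r : ℝ} (h0 : (427/50) ≤ r) (h1 : r ≤ (467/50)) :
    1 + 2*r*Real.exp (-((1+Real.log r)/(r-1))) ≤ (1+2*r)*Real.exp (-(Real.log (1+2*r)/r)) := by
  have hlam : Real.exp (2126791/1000000) ≤ (427/50) := by
    have h := exp_rat_ub (2126791/1000000) (by norm_num) (by norm_num)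
    have hn : ((1 - ((2126791/1000000):ℝ)/128)^(128:ℕ))⁻¹ ≤ (427/50) := by
      rw [inv_le_comm₀ (by positivity) (by norm_num)]
      norm_num
    linarith
  have hmuA : Real.log (1+2*((467/50):ℝ)) ≤ (174537/500000) * (427/50) := by
    have hsplit : (1+2*((467/50):ℝ)) = 2^(4:ℕ) * (123/100) := by norm_num
    rw [hsplit, Real.log_mul (by norm_num) (by norm_num), Real.log_pow]
    have hu := log_ub (y := ((123/100):ℝ)) (by norm_num)
    have h2 := Real.log_two_lt_d9
    push_cast
    nlinarith [Real.log_nonneg (show (1:ℝ) ≤ (123/100) by norm_num)]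
  have hkap : Real.exp (174537/500000) ≤ (1418431/1000000) := by
    have h := exp_rat_ub (174537/500000) (by norm_num) (by norm_num)
    have hn : ((1 - ((174537/500000):ℝ)/128)^(128:ℕ))⁻¹ ≤ (1418431/1000000) := by
      rw [inv_le_comm₀ (by positivity) (by norm_num)]
      norm_num
    linarith
  have hq : Real.exp (-((1+(2126791/1000000))/(((467/50):ℝ)-1))) ≤ (27509/40000) := by
    have h := exp_rat_lb ((1+(2126791/1000000))/(((467/50):ℝ)-1)) (by norm_num)
    rw [Real.exp_neg]
    have h2 : (Real.exp ((1+(2126791/1000000))/(((467/50):ℝ)-1)))⁻¹ ≤ ((1+((1+(2126791/1000000))/(((467/50):ℝ)-1))/128)^(128:ℕ))⁻¹ :=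
      inv_anti₀ (by positivity) h
    have h3 : ((1+((1+(2126791/1000000))/(((467/50):ℝ)-1))/128)^(128:ℕ))⁻¹ ≤ (27509/40000) := by
      rw [inv_le_comm₀ (by positivity) (by norm_num)]
      norm_num
    linarith
  exact piece_aux (427/50) (467/50) (2126791/1000000) (174537/500000) (27509/40000) (1418431/1000000) r (by norm_num) h0 h1
    (by norm_num) hlam hmuA hkap hq (by norm_num) (by norm_num)

lemma piece15 {r : ℝ} (h0 : (467/50) ≤ r) (h1 : r ≤ 10) :
    1 + 2*r*Real.exp (-((1+Real.log r)/(r-1))) ≤ (1+2*r)*Real.exp (-(Real.log (1+2*r)/r)) := by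
  have hlam : Real.exp (553701/250000) ≤ (467/50) := by
    have h := exp_rat_ub (553701/250000) (by norm_num) (by norm_num)
    have hn : ((1 - ((553701/250000):ℝ)/128)^(128:ℕ))⁻¹ ≤ (467/50) := by
      rw [inv_le_comm₀ (by positivity) (by norm_num)]
      norm_num
    linarith
  have hmuA : Real.log (1+2*(10:ℝ)) ≤ (326327/1000000) * (467/50) := by
    have hsplit : (1+2*(10:ℝ)) = 2^(4:ℕ) * (21/16) := by norm_num
    rw [hsplit, Real.log_mul (by norm_num) (by norm_num), Real.log_pow]
    have hu := log_ub (y := ((21/16):ℝ)) (by norm_num)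
    have h2 := Real.log_two_lt_d9
    push_cast
    nlinarith [Real.log_nonneg (show (1:ℝ) ≤ (21/16) by norm_num)]
  have hkap : Real.exp (326327/1000000) ≤ (1386447/1000000) := by
    have h := exp_rat_ub (326327/1000000) (by norm_num) (by norm_num)
    have hn : ((1 - ((326327/1000000):ℝ)/128)^(128:ℕ))⁻¹ ≤ (1386447/1000000) := by
      rw [inv_le_comm₀ (by positivity) (by norm_num)]
      norm_num
    linarith
  have hq : Real.exp (-((1+(553701/250000))/((10:ℝ)-1))) ≤ (699981/1000000) := by
    have h := exp_rat_lb ((1+(553701/250000))/((10:ℝ)-1)) (by norm_num)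
    rw [Real.exp_neg]
    have h2 : (Real.exp ((1+(553701/250000))/((10:ℝ)-1)))⁻¹ ≤ ((1+((1+(553701/250000))/((10:ℝ)-1))/128)^(128:ℕ))⁻¹ :=
      inv_anti₀ (by positivity) h
    have h3 : ((1+((1+(553701/250000))/((10:ℝ)-1))/128)^(128:ℕ))⁻¹ ≤ (699981/1000000) := by
      rw [inv_le_comm₀ (by positivity) (by norm_num)]
      norm_num
    linarith
  exact piece_aux (467/50) 10 (553701/250000) (326327/1000000) (699981/1000000) (1386447/1000000) r (by norm_num) h0 h1
    (by norm_num) hlam hmuA hkap hq (by norm_num) (by norm_num)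


lemma mainIneq {r : ℝ} (hr : 1 < r) :
    1 + 2*r*Real.exp (-((1+Real.log r)/(r-1))) ≤ (1+2*r)*Real.exp (-(Real.log (1+2*r)/r)) := by
  rcases le_or_gt r 1.78 with hc | hc
  · exact regimeA hr hc
  rcases le_or_gt r (103/50) with hu | hu
  · exact piece0 (by linarith) hu
  rcases le_or_gt r (59/25) with hu | hu
  · exact piece1 (by linarith) hu
  rcases le_or_gt r (269/100) with hu | hu
  · exact piece2 (by linarith) hu
  rcases le_or_gt r (303/100) with hu | hu
  · exact piece3 (by linarith) hu
  rcases le_or_gt r (339/100) with hu | hu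
  · exact piece4 (by linarith) hu
  rcases le_or_gt r (383/100) with hu | hu
  · exact piece5 (by linarith) hu
  rcases le_or_gt r (43/10) with hu | hu
  · exact piece6 (by linarith) hu
  rcases le_or_gt r (481/100) with hu | hu
  · exact piece7 (by linarith) hu
  rcases le_or_gt r (107/20) with hu | hu
  · exact piece8 (by linarith) hu
  rcases le_or_gt r (591/100) with hu | hu
  · exact piece9 (by linarith) hu
  rcases le_or_gt r (649/100) with hu | hu
  · exact piece10 (by linarith) hu
  rcases le_or_gt r (177/25) with hu | hu
  · exact piece11 (by linarith) hu
  rcases le_or_gt r (779/100) with hu | hu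
  · exact piece12 (by linarith) hu
  rcases le_or_gt r (427/50) with hu | hu
  · exact piece13 (by linarith) hu
  rcases le_or_gt r (467/50) with hu | hu
  · exact piece14 (by linarith) hu
  rcases le_or_gt r 10 with hu | hu
  · exact piece15 (by linarith) hu
  exact regimeC (by linarith)

theorem stmt_14 (r δ : ℝ) (hr : 1 < r) (hδ : 0 ≤ δ) :
    (1 + 2 * r) ^ (r - 1) * (1 + 2 * (r - 1) / (1 + δ)) ^ (-r) ≤ 1 →
      (1 / (r * Real.exp 1)) * ((1 + δ) / (1 - 1 / r)) ^ (r - 1) ≤ 1 := by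
  intro h
  have hr0 : (0:ℝ) < r := by linarith
  have hA : (0:ℝ) < 1 + δ := by linarith
  have hx0 : 0 < 2*(r-1)/(1+δ) := by
    apply div_pos (by linarith) hA
  set x := 2*(r-1)/(1+δ) with hxdef
  have hx1 : (0:ℝ) < 1 + x := by linarith
  have h2r0 : (0:ℝ) < 1+2*r := by linarith
  have hxr : (0:ℝ) < (1+x)^r := Real.rpow_pos_of_pos hx1 r
  have h1 : (1+2*r)^(r-1) ≤ (1+x)^r := by
    rw [Real.rpow_neg hx1.le, mul_inv_le_iff₀ hxr, one_mul] at h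
    exact h
  have h2 : (1+2*r)^((r-1)/r) ≤ 1+x := by
    have h3 := Real.rpow_le_rpow (Real.rpow_nonneg (by linarith) _) h1 (by positivity : (0:ℝ) ≤ 1/r)
    rwa [← Real.rpow_mul (by linarith : (0:ℝ) ≤ 1+2*r), ← Real.rpow_mul hx1.le,
      mul_one_div, mul_one_div, div_self (ne_of_gt hr0), Real.rpow_one] at h3
  have hform : (1+2*r)*Real.exp (-(Real.log (1+2*r)/r)) = (1+2*r)^((r-1)/r) := by
    rw [Real.rpow_def_of_pos h2r0]
    nth_rewrite 1 [← Real.exp_log h2r0]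
    rw [← Real.exp_add]
    congr 1
    field_simp
    ring
  have hMAIN := mainIneq hr
  have hx_ge : 2*r*Real.exp (-((1+Real.log r)/(r-1))) ≤ x := by
    rw [hform] at hMAIN
    linarith
  have hne3 : r - 1 ≠ 0 := by intro hz; rw [sub_eq_zero] at hz; rw [← hz] at hr; linarith
  have hzx : (1+δ)/(1-1/r) = 2*r/x := by
    rw [hxdef]
    field_simp
  have hz_le : (1+δ)/(1-1/r) ≤ Real.exp ((1+Real.log r)/(r-1)) := by
    rw [hzx, div_le_iff₀ hx0]
    have hmul := mul_le_mul_of_nonneg_left hx_ge (Real.exp_pos ((1+Real.log r)/(r-1))).le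
    have hprod : Real.exp ((1+Real.log r)/(r-1)) * Real.exp (-((1+Real.log r)/(r-1))) = 1 := by
      rw [← Real.exp_add]; simp
    nlinarith [hmul, hprod]
  have hz0 : (0:ℝ) ≤ (1+δ)/(1-1/r) := by
    apply div_nonneg (by linarith)
    rw [sub_nonneg]
    rw [div_le_one hr0]
    linarith
  have hfin : ((1+δ)/(1-1/r)) ^ (r-1) ≤ (Real.exp ((1+Real.log r)/(r-1))) ^ (r-1) :=
    Real.rpow_le_rpow hz0 hz_le (by linarith)
  have hpow : (Real.exp ((1+Real.log r)/(r-1))) ^ (r-1) = r * Real.exp 1 := by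
    rw [← Real.exp_one_rpow ((1+Real.log r)/(r-1)), ← Real.rpow_mul (Real.exp_pos 1).le]
    have hexp : (1+Real.log r)/(r-1) * (r-1) = 1 + Real.log r := by
      field_simp
    rw [hexp, Real.exp_one_rpow, Real.exp_add, Real.exp_log hr0]
    ring
  have hre : (0:ℝ) < r*Real.exp 1 := by positivity
  calc (1 / (r * Real.exp 1)) * ((1 + δ) / (1 - 1 / r)) ^ (r - 1)
      ≤ (1 / (r * Real.exp 1)) * (r * Real.exp 1) := by
        rw [hpow] at hfin
        apply mul_le_mul_of_nonneg_left hfin (by positivity)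
    _ = 1 := by field_simp
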